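/- If S is a closed π-invariant K-subspace of E with S ≠ 0, then S ∩ M ≠ 0. -/

import Mathlib

/-- Setup as in the weight-projection model: `E` a normed space over a complete
nontrivially normed field `K`, `(π_i)` continuous idempotent, mutually orthogonal,
finite-rank projections summing pointwise to the identity, `M = ∑_i range(π_i)`.
If `S` is a closed `π`-invariant subspace of `E` with `S ≠ 0`, then `S ∩ M ≠ 0`. -/
theorem stmt_9 {K : Type*} [NontriviallyNormedField K] [CompleteSpace K]
    {E : Type*} [NormedAddCommGroup E] [NormedSpace K E] {ι : Type*}
    (π : ι → E →L[K] E)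
    (hidem : ∀ i, (π i).comp (π i) = π i)
    (horth : ∀ i j, i ≠ j → (π i).comp (π j) = 0)
    (hfd : ∀ i, FiniteDimensional K (LinearMap.range (π i : E →ₗ[K] E)))
    (hsum : ∀ x : E, HasSum (fun i => (π i) x) x)
    (S : Submodule K E) (hclosed : IsClosed (S : Set E))
    (hinv : ∀ i, ∀ x ∈ S, π i x ∈ S) (hne : S ≠ ⊥) :
    S ⊓ (⨆ j, LinearMap.range (π j : E →ₗ[K] E)) ≠ ⊥ := by
  obtain ⟨x, hxS, hx0⟩ := Submodule.exists_mem_ne_zero_of_ne_bot hne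
  have hex : ∃ i, π i x ≠ 0 := by
    by_contra h
    push_neg at h
    have hs := hsum x
    simp only [h] at hs
    exact hx0 (hs.unique hasSum_zero)
  obtain ⟨i, hi⟩ := hex
  intro hbot
  have hmem : π i x ∈ S ⊓ (⨆ j, LinearMap.range (π j : E →ₗ[K] E)) :=
    ⟨hinv i x hxS, Submodule.mem_iSup_of_mem i ⟨x, rfl⟩⟩
  rw [hbot, Submodule.mem_bot] at hmem
  exact hi hmem
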